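/- Let V be a real vector space, Δ ⊆ V a finite linearly independent subset, λ ∈ V, and set X := λ − ℤ₊Δ. For a nonempty subset Y ⊆ X, the following are equivalent: (a) Y is ({2},{1,2})-closed in X, i.e., whenever y₁ + y₂ = x₁ + x₂ with y₁, y₂ ∈ Y and x₁, x₂ ∈ X (repetitions allowed), one has x₁, x₂ ∈ Y; (b) there exists a (necessarily unique) subset Δ' ⊆ Δ with Y = λ − ℤ₊Δ'. -/

import Mathlib

open Finsupp

/-- `R₊ := R ∩ [0,∞)`. -/
def Rplus (R : Set ℝ) : Set ℝ := R ∩ Set.Ici 0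

/-- `ℓ(f) := Σ_v f(v)`. -/
noncomputable def ell {V : Type*} [AddCommGroup V] [Module ℝ V] (f : V →₀ ℝ) : ℝ :=
  f.sum fun _ r => r

/-- `ℓ⃗(f) := Σ_v f(v) • v`. -/
noncomputable def vell {V : Type*} [AddCommGroup V] [Module ℝ V] (f : V →₀ ℝ) : V :=
  f.sum fun v r => r • v

/-- `f ∈ Fin(X,R)`: finitely supported, support in `X`, values in `R ∪ {0}`. -/
def IsFinSupp {V : Type*} [AddCommGroup V] [Module ℝ V] (X : Set V) (R : Set ℝ)
    (f : V →₀ ℝ) : Prop :=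
  ↑f.support ⊆ X ∧ ∀ v, f v ∈ R ∪ {0}

/-- `Y` is a weak `R`-face of `X`. -/
def IsWeakFace {V : Type*} [AddCommGroup V] [Module ℝ V] (X Y : Set V) (R : Set ℝ) : Prop :=
  ∀ f g : V →₀ ℝ, IsFinSupp X (Rplus R) f → IsFinSupp Y (Rplus R) g →
    ell f = ell g → 0 < ell g → vell f = vell g → ↑f.support ⊆ Y

/-- `Y` is a positive weak `R`-face of `X`. -/
def IsPosWeakFace {V : Type*} [AddCommGroup V] [Module ℝ V] (X Y : Set V) (R : Set ℝ) : Prop :=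
  ∀ f g : V →₀ ℝ, IsFinSupp X (Rplus R) f → IsFinSupp Y (Rplus R) g →
    vell f = vell g → ell g ≤ ell f ∧ (ell g = ell f ↔ ↑f.support ⊆ Y)

/-- `Y` is `(R',R)`-closed in `X`. -/
def IsRClosed {V : Type*} [AddCommGroup V] [Module ℝ V] (X Y : Set V) (R' R : Set ℝ) : Prop :=
  ∀ f g : V →₀ ℝ, IsFinSupp X R f → IsFinSupp Y R g →
    ell f = ell g → ell f ∈ R' → ell f ≠ 0 → vell f = vell g → ↑f.support ⊆ Y

/-- The maximizer set `X(φ)`. -/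
def maximizer {V : Type*} [AddCommGroup V] [Module ℝ V] (X : Set V) (φ : V →ₗ[ℝ] ℝ) : Set V :=
  {x | x ∈ X ∧ ∀ x' ∈ X, φ x' ≤ φ x}

section Aux
variable {V : Type*} [AddCommGroup V] [Module ℝ V]


lemma mem_closure_iff_finsupp (S : Set V) (q : V) :
    q ∈ AddSubmonoid.closure S ↔
      ∃ f : V →₀ ℕ, ↑f.support ⊆ S ∧ q = f.sum fun v n => n • v := by
  classical
  constructor
  · intro hq
    induction hq using AddSubmonoid.closure_induction with
    | mem v hv => exact ⟨Finsupp.single v 1, by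
        refine ⟨?_, by simp⟩
        intro a ha
        simp only [Finset.mem_coe, Finsupp.mem_support_iff] at ha
        rcases Finsupp.single_apply_ne_zero.mp ha with ⟨h1, _⟩
        exact h1 ▸ hv⟩
    | zero => exact ⟨0, by simp, by simp⟩
    | add x y hx hy ihx ihy =>
        obtain ⟨f, hf, hfx⟩ := ihx
        obtain ⟨g, hg, hgy⟩ := ihy
        refine ⟨f + g, ?_, ?_⟩
        · refine subset_trans (Finset.coe_subset.mpr Finsupp.support_add) ?_
          rw [Finset.coe_union]; exact Set.union_subset hf hg
        · rw [hfx, hgy, Finsupp.sum_add_index] <;> intros <;> simp [add_smul]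
  · rintro ⟨f, hf, rfl⟩
    refine AddSubmonoid.sum_mem _ fun v hv => ?_
    have hvS : v ∈ S := hf (Finset.mem_coe.mpr hv)
    show f v • v ∈ AddSubmonoid.closure S
    exact (AddSubmonoid.closure S).nsmul_mem (AddSubmonoid.subset_closure hvS) (f v)

lemma sum_nat_smul_eq (f : V →₀ ℕ) :
    Finsupp.linearCombination ℝ id (f.mapRange ((↑·) : ℕ → ℝ) (by simp)) =
      f.sum fun v n => n • v := by
  rw [Finsupp.linearCombination_apply, Finsupp.sum_mapRange_index (by simp)]
  exact Finsupp.sum_congr fun v _ => by simp [Nat.cast_smul_eq_nsmul]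

lemma cancel_lemma {Δ Δ' : Set V}
    (hind : LinearIndependent ℝ (fun x : Δ => (x : V))) (hsub : Δ' ⊆ Δ)
    (f g h : V →₀ ℕ) (hf : ↑f.support ⊆ Δ) (hg : ↑g.support ⊆ Δ) (hh : ↑h.support ⊆ Δ')
    (heq : ((f.sum fun v n => n • v) + g.sum fun v n => n • v) = h.sum fun v n => n • v) :
    ↑f.support ⊆ Δ' ∧ ↑g.support ⊆ Δ' := by
  classical
  set F := f.mapRange ((↑·) : ℕ → ℝ) (by simp) with hF
  set G := g.mapRange ((↑·) : ℕ → ℝ) (by simp) with hG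
  set H := h.mapRange ((↑·) : ℕ → ℝ) (by simp) with hH
  have hsupF : ↑F.support ⊆ Δ := subset_trans (Finset.coe_subset.mpr Finsupp.support_mapRange) hf
  have hsupG : ↑G.support ⊆ Δ := subset_trans (Finset.coe_subset.mpr Finsupp.support_mapRange) hg
  have hsupH : ↑H.support ⊆ Δ :=
    subset_trans (subset_trans (Finset.coe_subset.mpr Finsupp.support_mapRange) hh) hsub
  have hl : F + G - H ∈ Finsupp.supported ℝ ℝ Δ := by
    rw [Finsupp.mem_supported]
    refine subset_trans (Finset.coe_subset.mpr (Finsupp.support_sub (f := F + G) (g := H))) ?_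
    rw [Finset.coe_union]
    refine Set.union_subset (subset_trans ?_ (Set.union_subset hsupF hsupG)) hsupH
    exact subset_trans (Finset.coe_subset.mpr Finsupp.support_add) (by rw [Finset.coe_union])
  have hl0 : Finsupp.linearCombination ℝ id (F + G - H) = 0 := by
    rw [map_sub, map_add, hF, hG, hH, sum_nat_smul_eq, sum_nat_smul_eq, sum_nat_smul_eq, heq,
      sub_self]
  have hzero : F + G - H = 0 := linearIndepOn_iff.mp (linearIndependent_subtype_iff.mp hind) _ hl hl0
  have hFGH : F + G = H := sub_eq_zero.mp hzero
  constructor <;> intro v hv <;> rw [Finset.mem_coe, Finsupp.mem_support_iff] at hv <;>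
    refine hh (Finset.mem_coe.mpr (Finsupp.mem_support_iff.mpr ?_))
  · have := DFunLike.congr_fun hFGH v
    simp only [Finsupp.add_apply, hF, hG, hH, Finsupp.mapRange_apply] at this
    intro h0
    rw [h0] at this
    have : (f v : ℝ) + g v = 0 := by exact_mod_cast this
    have hfv : (0:ℝ) < f v := by exact_mod_cast Nat.pos_of_ne_zero hv
    nlinarith [Nat.cast_nonneg (α := ℝ) (g v)]
  · have := DFunLike.congr_fun hFGH v
    simp only [Finsupp.add_apply, hF, hG, hH, Finsupp.mapRange_apply] at this
    intro h0
    rw [h0] at this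
    have : (f v : ℝ) + g v = 0 := by exact_mod_cast this
    have hgv : (0:ℝ) < g v := by exact_mod_cast Nat.pos_of_ne_zero hv
    nlinarith [Nat.cast_nonneg (α := ℝ) (f v)]



end Aux

/-- For `X := λ − ℤ₊Δ` (the set of weights of the Verma module `M(λ)`)
and a nonempty `Y ⊆ X`, `Y` is `({2},{1,2})`-closed in `X` iff `Y = λ − ℤ₊Δ'` for
some subset `Δ' ⊆ Δ`. -/
theorem statement15 {V : Type*} [AddCommGroup V] [Module ℝ V]
    (Δ : Set V) (hfin : Δ.Finite)
    (hind : LinearIndependent ℝ (fun x : Δ => (x : V)))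
    (lam : V) (Y : Set V)
    (hY : Y ⊆ {x : V | ∃ q ∈ AddSubmonoid.closure Δ, x = lam - q})
    (hne : Y.Nonempty) :
    (∀ y₁ ∈ Y, ∀ y₂ ∈ Y,
      ∀ x₁ ∈ {x : V | ∃ q ∈ AddSubmonoid.closure Δ, x = lam - q},
      ∀ x₂ ∈ {x : V | ∃ q ∈ AddSubmonoid.closure Δ, x = lam - q},
        y₁ + y₂ = x₁ + x₂ → x₁ ∈ Y ∧ x₂ ∈ Y) ↔
    (∃ Δ' ⊆ Δ, Y = {x : V | ∃ q ∈ AddSubmonoid.closure Δ', x = lam - q}) := by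
  classical
  classical
  set X := {x : V | ∃ q ∈ AddSubmonoid.closure Δ, x = lam - q} with hX
  constructor
  · intro hcl
    obtain ⟨y0, hy0⟩ := hne
    obtain ⟨q0, hq0, hy0q⟩ := hY hy0
    have hlamX : lam ∈ X := ⟨0, zero_mem _, by simp⟩
    have hlam : lam ∈ Y := by
      have h2 : lam - (q0 + q0) ∈ X := ⟨q0 + q0, add_mem hq0 hq0, rfl⟩
      exact (hcl y0 hy0 y0 hy0 lam hlamX _ h2 (by rw [hy0q]; abel)).1
    refine ⟨{α | α ∈ Δ ∧ lam - α ∈ Y}, fun α hα => hα.1, ?_⟩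
    ext x
    simp only [Set.mem_setOf_eq]
    constructor
    · intro hx
      obtain ⟨q, hq, hxq⟩ := hY hx
      obtain ⟨f, hfsup, hfq⟩ := (mem_closure_iff_finsupp Δ q).mp hq
      refine ⟨q, ?_, hxq⟩
      have key : ∀ v ∈ f.support, v ∈ {α | α ∈ Δ ∧ lam - α ∈ Y} := by
        intro v hv
        have hvΔ : v ∈ Δ := hfsup (Finset.mem_coe.mpr hv)
        refine ⟨hvΔ, ?_⟩
        -- q - v ∈ closure Δ
        have hrest : ∃ r ∈ AddSubmonoid.closure Δ, q = v + r := by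
          have hsplit : q = f v • v + ∑ w ∈ f.support.erase v, f w • w := by
            rw [hfq, Finsupp.sum]
            exact (Finset.add_sum_erase _ (fun a => f a • a) hv).symm
          obtain ⟨n, hn⟩ := Nat.exists_eq_succ_of_ne_zero (Finsupp.mem_support_iff.mp hv)
          refine ⟨n • v + ∑ w ∈ f.support.erase v, f w • w, ?_, ?_⟩
          · refine add_mem ((AddSubmonoid.closure Δ).nsmul_mem
              (AddSubmonoid.subset_closure hvΔ) n) ?_
            refine AddSubmonoid.sum_mem _ fun w hw => ?_
            exact (AddSubmonoid.closure Δ).nsmul_mem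
              (AddSubmonoid.subset_closure (hfsup (Finset.mem_coe.mpr
                (Finset.mem_of_mem_erase hw)))) _
          · rw [hsplit, hn, succ_nsmul]
            abel
        obtain ⟨r, hr, hqr⟩ := hrest
        have hx1 : lam - v ∈ X := ⟨v, AddSubmonoid.subset_closure hvΔ, rfl⟩
        have hx2 : lam - r ∈ X := ⟨r, hr, rfl⟩
        have heq : x + lam = (lam - v) + (lam - r) := by
          rw [hxq, hqr]; abel
        exact (hcl x hx lam hlam _ hx1 _ hx2 heq).1
      rw [hfq]
      refine AddSubmonoid.sum_mem _ fun v hv => ?_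
      show f v • v ∈ AddSubmonoid.closure {α | α ∈ Δ ∧ lam - α ∈ Y}
      exact (AddSubmonoid.closure _).nsmul_mem (AddSubmonoid.subset_closure (key v hv)) _
    · rintro ⟨q, hq, rfl⟩
      induction hq using AddSubmonoid.closure_induction with
      | mem v hv => exact hv.2
      | zero => simpa using hlam
      | add a b ha hb iha ihb =>
          have haΔ : a ∈ AddSubmonoid.closure Δ :=
            AddSubmonoid.closure_mono (fun α hα => hα.1) ha
          have hbΔ : b ∈ AddSubmonoid.closure Δ :=
            AddSubmonoid.closure_mono (fun α hα => hα.1) hb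
          have hx2 : lam - (a + b) ∈ X := ⟨a + b, add_mem haΔ hbΔ, rfl⟩
          exact (hcl _ iha _ ihb lam hlamX _ hx2 (by abel)).2
  · rintro ⟨Δ', hsub, rfl⟩
    intro y₁ hy₁ y₂ hy₂ x₁ hx₁ x₂ hx₂ heq
    obtain ⟨q₁, hq₁, rfl⟩ := hy₁
    obtain ⟨q₂, hq₂, rfl⟩ := hy₂
    obtain ⟨p₁, hp₁, rfl⟩ := hx₁
    obtain ⟨p₂, hp₂, rfl⟩ := hx₂
    have hpq : p₁ + p₂ = q₁ + q₂ := by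
      have e1 : p₁ + p₂ = lam + lam - ((lam - p₁) + (lam - p₂)) := by abel
      have e2 : q₁ + q₂ = lam + lam - ((lam - q₁) + (lam - q₂)) := by abel
      rw [e1, e2, heq]
    obtain ⟨f₁, hf₁, hp₁s⟩ := (mem_closure_iff_finsupp Δ p₁).mp hp₁
    obtain ⟨f₂, hf₂, hp₂s⟩ := (mem_closure_iff_finsupp Δ p₂).mp hp₂
    have hq12 : q₁ + q₂ ∈ AddSubmonoid.closure Δ' := add_mem hq₁ hq₂
    obtain ⟨g, hgsup, hgs⟩ := (mem_closure_iff_finsupp Δ' (q₁ + q₂)).mp hq12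
    have hsum : ((f₁.sum fun v n => n • v) + f₂.sum fun v n => n • v)
        = g.sum fun v n => n • v := by
      rw [← hp₁s, ← hp₂s, ← hgs, hpq]
    obtain ⟨h1, h2⟩ := cancel_lemma hind hsub f₁ f₂ g hf₁ hf₂ hgsup hsum
    constructor
    · exact ⟨p₁, (mem_closure_iff_finsupp Δ' p₁).mpr ⟨f₁, h1, hp₁s⟩, rfl⟩
    · exact ⟨p₂, (mem_closure_iff_finsupp Δ' p₂).mpr ⟨f₂, h2, hp₂s⟩, rfl⟩
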